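/- arXiv:2301.00121 — 2 statements merged into one kernel-verified Lean document; each statement's English description precedes it below -/
import Mathlib

section
/- With A(γ), A* as in CBP(F;d,γ), define P = P(γ) ∈ Mat_{d+1}(F) with (i,j)-entry (−i−γ)_j/(1−γ)_j, where (a)_r = a(a+1)⋯(a+r−1). Then A(γ)P(γ) = P(γ)A* and A*P(γ) = P(γ)A(−γ). -/
/-- The Pochhammer symbol `(a)_r = a(a+1)⋯(a+r-1)`. -/
def poch {F : Type*} [Field F] (a : F) (r : ℕ) : F :=
  ∏ ℓ ∈ Finset.range r, (a + ℓ)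

/-- The matrix `A(γ)` of the circular bidiagonal pair `CBP(F;d,γ)`. -/
def cbMat {F : Type*} [Field F] (d : ℕ) (γ : F) : Matrix (Fin (d + 1)) (Fin (d + 1)) F :=
  Matrix.of fun i j : Fin (d + 1) =>
    if i.val = j.val then (i.val : F) + γ
    else if i.val = j.val + 1 then -(i.val : F) - γ
    else if i.val = 0 ∧ j.val = d then -γ else 0

/-- The matrix `P(γ)` with entries `(-i-γ)_j / (1-γ)_j`. -/
def Pmat {F : Type*} [Field F] (d : ℕ) (γ : F) : Matrix (Fin (d + 1)) (Fin (d + 1)) F :=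
  Matrix.of fun i j : Fin (d + 1) =>
    poch (-(i.val : F) - γ) j.val / poch (1 - γ) j.val

section CBPaux
variable {F : Type*} [Field F]


lemma poch_succ (a : F) (j : ℕ) : poch a (j+1) = poch a j * (a + j) :=
  Finset.prod_range_succ _ _

lemma poch_succ' (a : F) (j : ℕ) : poch a (j+1) = a * poch (a+1) j := by
  induction j with
  | zero => simp [poch]
  | succ j ih =>
    rw [poch_succ, ih, poch_succ]
    push_cast
    ring

lemma poch_shift1 {d : ℕ} (hd : (d : F) = -1) (c : F) :
    poch (c - 1) (d+1) = poch c (d+1) := by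
  have h1 : poch (c-1) (d+1) = (c-1) * poch c d := by
    have := poch_succ' (c-1) d
    rwa [show c - 1 + 1 = c by ring] at this
  rw [h1, poch_succ, hd]
  ring

lemma poch_shift {d : ℕ} (hd : (d : F) = -1) (c : F) (k : ℕ) :
    poch (c - k) (d+1) = poch c (d+1) := by
  induction k with
  | zero => simp
  | succ k ih =>
    rw [show c - ((k:ℕ)+1 : ℕ) = (c - k) - 1 by push_cast; ring, poch_shift1 hd, ih]

lemma poch_ne_zero {d : ℕ} (γ : F) (hγ : ∀ i : ℕ, i ≤ d → γ ≠ (i : F)) (j : ℕ) (hj : j ≤ d) :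
    poch (1 - γ) j ≠ 0 := by
  unfold poch
  rw [Finset.prod_ne_zero_iff]
  intro ℓ hℓ
  rw [Finset.mem_range] at hℓ
  intro h
  refine hγ (ℓ+1) (by omega) ?_
  push_cast
  linear_combination -h


/-- cyclic predecessor -/
def prev {d : ℕ} (i : Fin (d+1)) : Fin (d+1) := ⟨if i.val = 0 then d else i.val - 1, by split <;> omega⟩

/-- cyclic successor -/
def succ' {d : ℕ} (j : Fin (d+1)) : Fin (d+1) := ⟨if j.val = d then 0 else j.val + 1, by split <;> omega⟩

lemma prev_val {d : ℕ} (i : Fin (d+1)) :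
    (i.val = 0 ∧ (prev i).val = d) ∨ ((prev i).val + 1 = i.val) := by
  have h := i.isLt
  simp only [prev]
  split <;> omega

lemma succ'_val {d : ℕ} (j : Fin (d+1)) :
    (j.val = d ∧ (succ' j).val = 0) ∨ ((succ' j).val = j.val + 1) := by
  have h := j.isLt
  simp only [succ']
  split <;> omega

lemma prev_ne {d : ℕ} (hd : 1 ≤ d) (i : Fin (d+1)) : prev i ≠ i := by
  have h := i.isLt; have hv := prev_val i
  simp only [Ne, Fin.ext_iff]
  omega

lemma succ'_ne {d : ℕ} (hd : 1 ≤ d) (j : Fin (d+1)) : succ' j ≠ j := by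
  have h := j.isLt; have hv := succ'_val j
  simp only [Ne, Fin.ext_iff]
  omega

lemma cb_zero {d : ℕ} (γ : F) (i k : Fin (d+1)) (h1 : k ≠ i) (h2 : k ≠ prev i) :
    cbMat d γ i k = 0 := by
  have hi := i.isLt; have hk := k.isLt; have hv := prev_val i
  simp only [Ne, Fin.ext_iff] at h1 h2
  simp only [cbMat, Matrix.of_apply]
  rw [if_neg (by omega), if_neg (by omega), if_neg (by omega)]

lemma cb_prev {d : ℕ} (hd : 1 ≤ d) (γ : F) (i : Fin (d+1)) :
    cbMat d γ i (prev i) = -(i.val : F) - γ := by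
  have hi := i.isLt
  simp only [cbMat, Matrix.of_apply]
  rcases prev_val i with ⟨h0, hp⟩ | hp
  · rw [if_neg (by omega), if_neg (by omega), if_pos (by omega), h0]
    simp
  · rw [if_neg (by omega), if_pos (by omega)]

lemma cb_diag {d : ℕ} (γ : F) (i : Fin (d+1)) :
    cbMat d γ i i = (i.val : F) + γ := by
  simp [cbMat]

lemma mulA {d : ℕ} (hd : 1 ≤ d) (γ : F) (M : Matrix (Fin (d+1)) (Fin (d+1)) F)
    (i j : Fin (d+1)) :
    (cbMat d γ * M) i j
      = ((i.val : F) + γ) * M i j + (-(i.val : F) - γ) * M (prev i) j := by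
  rw [Matrix.mul_apply]
  rw [show (Finset.univ : Finset (Fin (d+1))) = insert i (insert (prev i) (Finset.univ \ {i, prev i})) from ?_]
  · rw [Finset.sum_insert (by simp [Finset.mem_insert, (prev_ne hd i).symm]),
      Finset.sum_insert (by simp)]
    rw [cb_diag, cb_prev hd]
    have : ∑ k ∈ Finset.univ \ {i, prev i}, cbMat d γ i k * M k j = 0 := by
      apply Finset.sum_eq_zero
      intro k hk
      simp only [Finset.mem_sdiff, Finset.mem_insert, Finset.mem_singleton] at hk
      rw [cb_zero γ i k (by tauto) (by tauto), zero_mul]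
    rw [this]
    ring
  · ext k
    by_cases h1 : k = i <;> by_cases h2 : k = prev i <;>
      simp [h1, h2, Finset.mem_sdiff]

lemma cb_succ_col {d : ℕ} (hd : 1 ≤ d) (γ : F) (j : Fin (d+1)) :
    cbMat d γ (succ' j) j = -((succ' j).val : F) - γ := by
  have hj := j.isLt
  simp only [cbMat, Matrix.of_apply]
  rcases succ'_val j with ⟨h0, hp⟩ | hp
  · rw [if_neg (by omega), if_neg (by omega), if_pos (by omega), hp]
    simp
  · rw [if_neg (by omega), if_pos (by omega)]

lemma cb_col_zero {d : ℕ} (γ : F) (k j : Fin (d+1)) (h1 : k ≠ j) (h2 : k ≠ succ' j) :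
    cbMat d γ k j = 0 := by
  have hj := j.isLt; have hk := k.isLt; have hv := succ'_val j
  simp only [Ne, Fin.ext_iff] at h1 h2
  simp only [cbMat, Matrix.of_apply]
  rw [if_neg (by omega), if_neg (by omega), if_neg (by omega)]

lemma mulB {d : ℕ} (hd : 1 ≤ d) (γ : F) (M : Matrix (Fin (d+1)) (Fin (d+1)) F)
    (i j : Fin (d+1)) :
    (M * cbMat d γ) i j
      = M i j * ((j.val : F) + γ) + M i (succ' j) * (-((succ' j).val : F) - γ) := by
  rw [Matrix.mul_apply]
  rw [show (Finset.univ : Finset (Fin (d+1))) = insert j (insert (succ' j) (Finset.univ \ {j, succ' j})) from ?_]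
  · rw [Finset.sum_insert (by simp [Finset.mem_insert, (succ'_ne hd j).symm]),
      Finset.sum_insert (by simp)]
    rw [cb_diag, cb_succ_col hd]
    have : ∑ k ∈ Finset.univ \ {j, succ' j}, M i k * cbMat d γ k j = 0 := by
      apply Finset.sum_eq_zero
      intro k hk
      simp only [Finset.mem_sdiff, Finset.mem_insert, Finset.mem_singleton] at hk
      rw [cb_col_zero γ k j (by tauto) (by tauto), mul_zero]
    rw [this]
    ring
  · ext k
    by_cases h1 : k = j <;> by_cases h2 : k = succ' j <;>
      simp [h1, h2, Finset.mem_sdiff]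

lemma cast_prev {d : ℕ} (hd : 1 ≤ d) (hdF : (d : F) = -1) (i : Fin (d+1)) :
    ((prev i).val : F) = (i.val : F) - 1 := by
  rcases prev_val i with ⟨h0, hp⟩ | hp
  · rw [h0, hp, hdF]; simp
  · have := congrArg (fun n : ℕ => (n : F)) hp
    push_cast at this
    linear_combination this

lemma cast_succ' {d : ℕ} (hd : 1 ≤ d) (hdF : (d : F) = -1) (j : Fin (d+1)) :
    ((succ' j).val : F) = (j.val : F) + 1 := by
  rcases succ'_val j with ⟨h0, hp⟩ | hp
  · rw [h0, hp, hdF]; simp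
  · rw [hp]; push_cast; ring

end CBPaux

theorem stmt7 {F : Type*} [Field F] (d : ℕ) (hd : 1 ≤ d)
    (hprime : Nat.Prime (d + 1)) (hchar : CharP F (d + 1)) (γ : F)
    (hγ : ∀ i : ℕ, i ≤ d → γ ≠ (i : F)) :
    cbMat d γ * Pmat d γ =
        Pmat d γ * Matrix.diagonal (fun i : Fin (d + 1) => (i.val : F)) ∧
      Matrix.diagonal (fun i : Fin (d + 1) => (i.val : F)) * Pmat d γ =
        Pmat d γ * cbMat d (-γ) := by
  have hdF : (d : F) = -1 := by
    have h0 : ((d + 1 : ℕ) : F) = 0 := CharP.cast_eq_zero F (d+1)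
    push_cast at h0
    linear_combination h0
  constructor
  · ext i j
    rw [mulA hd γ (Pmat d γ) i j, Matrix.mul_diagonal]
    simp only [Pmat, Matrix.of_apply]
    rw [cast_prev hd hdF i]
    set a : F := -(i.val : F) - γ with ha
    rw [show -((i.val : F) - 1) - γ = a + 1 by rw [ha]; ring]
    have hQ : poch (1 - γ) j.val ≠ 0 := poch_ne_zero γ hγ j.val (by omega)
    have e1 := poch_succ a j.val
    have e2 := poch_succ' a j.val
    field_simp
    linear_combination e1 - e2
  · ext i j
    rw [mulB hd (-γ) (Pmat d γ) i j, Matrix.diagonal_mul]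
    simp only [Pmat, Matrix.of_apply]
    set a : F := -(i.val : F) - γ with ha
    have hQ : poch (1 - γ) j.val ≠ 0 := poch_ne_zero γ hγ j.val (by omega)
    rcases succ'_val j with ⟨h0, hp⟩ | hp
    · -- j.val = d, succ' j = 0
      rw [hp, h0]
      simp only [show ∀ b : F, poch b 0 = 1 from fun b => by simp [poch], Nat.cast_zero]
      have hsh := poch_shift hdF (-γ) (i.val + 1)
      have hL : poch (-γ - ((i.val + 1 : ℕ) : F)) (d+1)
          = (-γ - ((i.val : F) + 1)) * poch a d := by
        rw [poch_succ']
        rw [show -γ - ((i.val + 1 : ℕ) : F) + 1 = a by rw [ha]; push_cast; ring]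
        push_cast
        ring
      have hR : poch (-γ : F) (d+1) = -γ * poch (1 - γ) d := by
        rw [poch_succ']
        rw [show -γ + 1 = 1 - γ by ring]
      rw [hL, hR] at hsh
      rw [h0] at hQ
      rw [hdF]
      field_simp
      linear_combination -hsh
    · -- succ' j has value j.val + 1
      have hs1 : (succ' j).val ≤ d := by have := (succ' j).isLt; omega
      have hjd : j.val + 1 ≤ d := by omega
      rw [hp]
      have hQ' : (1 - γ + (j.val : F)) ≠ 0 := by
        intro h
        exact hγ (j.val + 1) hjd (by push_cast; linear_combination -h)
      rw [poch_succ a j.val, poch_succ (1-γ) j.val]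
      push_cast
      field_simp
      ring
end

section
/- With P(γ) as above (P_{i,j} = (−i−γ)_j/(1−γ)_j), one has P(γ)·P(−γ) = (d!/(1−γ)_d)·I. In particular P(γ) is invertible. -/
open Polynomial Finset

namespace Aux
variable {F : Type*} [Field F]

lemma poch_zero (a : F) : poch a 0 = 1 := Finset.prod_range_zero _

lemma poch_succ (a : F) (r : ℕ) : poch a (r+1) = poch a r * (a + r) :=
  Finset.prod_range_succ _ _

lemma poch_succ' (a : F) (r : ℕ) : poch a (r+1) = a * poch (a+1) r := by
  rw [poch, Finset.prod_range_succ', mul_comm]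
  have h : ∀ i ∈ Finset.range r, (a + (((i+1) : ℕ) : F)) = (a+1) + i := by
    intro i _; push_cast; ring
  rw [Finset.prod_congr rfl h]
  simp [poch]

lemma poch_add (a : F) (r s : ℕ) : poch a (r+s) = poch a r * poch (a + r) s := by
  rw [poch, Finset.prod_range_add]
  congr 1
  exact Finset.prod_congr rfl (by intro i _; push_cast; ring)

lemma poch_reflect (a : F) (k : ℕ) : poch (-a - k + 1) k = (-1)^k * poch a k := by
  rw [poch, ← Finset.prod_range_reflect]
  have h : ∀ j ∈ Finset.range k, (-a - (k:F) + 1 + ((k - 1 - j : ℕ):F)) = (-1) * (a + j) := by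
    intro j hj
    have hj' : j < k := Finset.mem_range.1 hj
    have h1 : 1 ≤ k := Nat.one_le_of_lt (Nat.lt_of_le_of_lt (Nat.zero_le _) hj')
    have h2 : j ≤ k - 1 := Nat.le_pred_of_lt hj'
    push_cast [Nat.cast_sub h2, Nat.cast_sub h1]
    ring
  rw [Finset.prod_congr rfl h, Finset.prod_mul_distrib, Finset.prod_const, Finset.card_range]
  rfl

lemma poch_ne_zero {a : F} {r : ℕ} (h : ∀ ℓ < r, a + ℓ ≠ 0) : poch a r ≠ 0 :=
  Finset.prod_ne_zero_iff.2 fun ℓ hℓ => h ℓ (Finset.mem_range.1 hℓ)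

section CharPrime
variable {n : ℕ} [hFp : Fact n.Prime] [CharP F n]

lemma cast_pow_char (j : ℕ) : (j:F)^n = (j:F) := by
  have h := congrArg (ZMod.castHom dvd_rfl F) (ZMod.pow_card (j : ZMod n))
  rw [map_pow, map_natCast] at h
  exact h

lemma prod_X_sub_zmod : ∏ a : ZMod n, (X - C a) = X^n - X := by
  have hn1 : 1 < n := hFp.out.one_lt
  have hdeg : (X^n - X : (ZMod n)[X]).natDegree = n :=
    FiniteField.X_pow_card_sub_X_natDegree_eq _ hn1
  have hr : (X^n - X : (ZMod n)[X]).roots = Finset.univ.val := by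
    have h := FiniteField.roots_X_pow_card_sub_X (ZMod n)
    rwa [ZMod.card] at h
  have hroots : Multiset.card (X^n - X : (ZMod n)[X]).roots
      = (X^n - X : (ZMod n)[X]).natDegree := by
    rw [hr, hdeg]; simpa using (ZMod.card n)
  have hmonic : (X^n - X : (ZMod n)[X]).Monic :=
    Polynomial.monic_X_pow_sub (by rw [Polynomial.degree_X]; exact_mod_cast hn1)
  have h := Polynomial.C_leadingCoeff_mul_prod_multiset_X_sub_C hroots
  rw [hmonic.leadingCoeff, map_one, one_mul, hr] at h
  rw [← h]
  exact Finset.prod_eq_multiset_prod _ _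

lemma prod_X_sub_natCast :
    ∏ m ∈ Finset.range n, (X - C ((m:F))) = X^n - X := by
  have h := congrArg (Polynomial.map (ZMod.castHom dvd_rfl F)) (prod_X_sub_zmod (n := n))
  rw [Polynomial.map_prod, Polynomial.map_sub, Polynomial.map_pow, Polynomial.map_X] at h
  rw [← h]
  refine Finset.prod_nbij' (fun m => ((m : ZMod n))) (fun a => a.val) ?_ ?_ ?_ ?_ ?_
  · intro m _; exact Finset.mem_univ _
  · intro a _; exact Finset.mem_range.2 (ZMod.val_lt a)
  · intro m hm; exact ZMod.val_cast_of_lt (Finset.mem_range.1 hm)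
  · intro a _; simp [ZMod.natCast_val, ZMod.cast_id]
  · intro m _
    rw [Polynomial.map_sub, Polynomial.map_X, Polynomial.map_C]
    congr 1
    simp

lemma prod_lin (b : F) : ∏ m ∈ Finset.range n, (b - (m:F)) = b^n - b := by
  have h := congrArg (Polynomial.eval b) (prod_X_sub_natCast (F := F) (n := n))
  simpa [Polynomial.eval_prod] using h

lemma poch_char (b : F) : poch b n = b^n - b := by
  obtain ⟨d, rfl⟩ : ∃ d, n = d + 1 := ⟨n-1, (Nat.succ_pred_eq_of_pos hFp.out.pos).symm⟩
  have hd1 : ((d:ℕ):F) = -1 := by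
    have h0 : ((d:ℕ):F) + 1 = 0 := by exact_mod_cast CharP.cast_eq_zero F (d+1)
    linear_combination h0
  rw [← prod_lin b, poch, Finset.prod_range_succ', Finset.prod_range_succ']
  congr 1
  · rw [← Finset.prod_range_reflect (fun i => b + (((i+1):ℕ):F)) d]
    refine Finset.prod_congr rfl fun i hi => ?_
    have hi' : i < d := Finset.mem_range.1 hi
    have h2 : (d - 1 - i) + 1 = d - i := by omega
    simp only [h2]
    have h3 : ((d - i : ℕ) : F) = (d:F) - i := by
      rw [Nat.cast_sub (le_of_lt hi')]
    rw [h3, hd1]; push_cast; ring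
  · simp

lemma sum_inv_lin (γ : F) (h : ∀ m : ℕ, γ - (m:F) ≠ 0) :
    ∑ j ∈ Finset.range n, (γ - (j:F))⁻¹ = -(γ^n - γ)⁻¹ := by
  classical
  have hD : Polynomial.derivative (∏ m ∈ Finset.range n, (X - C ((m:F))))
      = ∑ j ∈ Finset.range n, (∏ m ∈ (Finset.range n).erase j, (X - C ((m:F))))
          * Polynomial.derivative (X - C ((j:F))) := by
    rw [Finset.prod_eq_multiset_prod, Polynomial.derivative_prod, Finset.sum_eq_multiset_sum]
    congr 1
  rw [prod_X_sub_natCast] at hD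
  have hD2 : ∀ j ∈ Finset.range n,
      (∏ m ∈ (Finset.range n).erase j, (X - C ((m:F)))) * Polynomial.derivative (X - C ((j:F)))
      = ∏ m ∈ (Finset.range n).erase j, (X - C ((m:F))) := by
    intro j _
    rw [Polynomial.derivative_sub, Polynomial.derivative_X, Polynomial.derivative_C, sub_zero,
      mul_one]
  rw [Finset.sum_congr rfl hD2] at hD
  have hRHS : Polynomial.derivative (X^n - X : F[X]) = -1 := by
    rw [Polynomial.derivative_sub, Polynomial.derivative_X, Polynomial.derivative_X_pow]
    rw [CharP.cast_eq_zero F n, Polynomial.C_0, zero_mul, zero_sub]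
  rw [hRHS] at hD
  have hEval := congrArg (Polynomial.eval γ) hD
  rw [Polynomial.eval_finset_sum] at hEval
  simp only [Polynomial.eval_prod, Polynomial.eval_sub, Polynomial.eval_X, Polynomial.eval_C,
    Polynomial.eval_neg, Polynomial.eval_one] at hEval
  -- hEval : ∑ j ∈ range n, ∏ m ∈ erase j, (γ - m) = -1
  have hP : (∏ m ∈ Finset.range n, (γ - (m:F))) ≠ 0 :=
    Finset.prod_ne_zero_iff.2 fun m _ => h m
  have hterm : ∀ j ∈ Finset.range n,
      (γ - (j:F))⁻¹ = (∏ m ∈ (Finset.range n).erase j, (γ - (m:F)))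
        * (∏ m ∈ Finset.range n, (γ - (m:F)))⁻¹ := by
    intro j hj
    rw [← Finset.mul_prod_erase _ _ hj, mul_inv, ← mul_assoc, mul_comm _ ((γ - (j:F))⁻¹)]
    rw [mul_assoc, mul_inv_cancel₀ (Finset.prod_ne_zero_iff.2 fun m _ => h m), mul_one]
  rw [Finset.sum_congr rfl hterm, ← Finset.sum_mul, ← hEval, prod_lin γ]
  ring

lemma neg_pow_char (x : F) : (-x)^n = -(x^n) := by
  have h := sub_pow_char (R := F) (p := n) (x := 0) (y := x)
  simpa [zero_pow hFp.out.ne_zero] using h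

lemma gosper_sum (γ m : F) (hm : m ≠ 0)
    (hsub : ∀ j : ℕ, γ - (j:F) ≠ 0)
    (hMn : poch (m - γ) n = γ - γ^n)
    (hW : γ - γ^n ≠ 0) :
    ∑ j ∈ Finset.range n, poch (m - γ) j / poch (1 - γ) j = 0 := by
  have hpoch1 : ∀ r, poch (1-γ) r ≠ 0 := fun r => poch_ne_zero (fun ℓ _ => by
    have h := hsub (ℓ+1); intro hc; apply h; push_cast; linear_combination -hc)
  have hpochn : ∀ r, poch (-γ) r ≠ 0 := fun r => poch_ne_zero (fun ℓ _ => by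
    have h := hsub ℓ; intro hc; apply h; linear_combination -hc)
  set U : ℕ → F := fun j => -γ/m * poch (m-γ) j / poch (-γ) j with hU
  have hstep : ∀ j, poch (m-γ) j / poch (1-γ) j = U (j+1) - U j := by
    intro j
    have e1 : poch (-γ) (j+1) = poch (-γ) j * (-γ + j) := poch_succ _ _
    have e2 : poch (-γ) (j+1) = (-γ) * poch (1-γ) j := by
      rw [poch_succ']; ring_nf
    have e4 : poch (-γ) j * (-γ + j) = (-γ) * poch (1-γ) j := e1.symm.trans e2
    have hjγ : (-γ + (j:F)) ≠ 0 := by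
      have h := hsub j; intro hc; apply h; linear_combination -hc
    have hγ0 : γ ≠ 0 := by have h := hsub 0; simpa using h
    have hB : poch (-γ) j ≠ 0 := hpochn j
    have hB1' : poch (1-γ) j ≠ 0 := hpoch1 j
    have hB1 : poch (1-γ) j = poch (-γ) j * (-γ + (j:F)) / (-γ) := by
      rw [e4]; field_simp
    simp only [hU]
    rw [poch_succ (m-γ), poch_succ (-γ), hB1]
    field_simp
    ring
  rw [Finset.sum_congr rfl (fun j _ => hstep j), Finset.sum_range_sub]
  have hpn : poch (-γ) n = γ - γ^n := by
    rw [poch_char, neg_pow_char]; ring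
  simp only [hU, poch_zero, hMn, hpn]
  field_simp
  ring

lemma phi_zero (γ : F) (hsub : ∀ j : ℕ, γ - (j:F) ≠ 0) :
    ∑ j ∈ Finset.range n, poch (-γ) j / poch (1-γ) j = -γ * (γ^n - γ)⁻¹ := by
  have hterm : ∀ j ∈ Finset.range n, poch (-γ) j / poch (1-γ) j = γ * (γ - j)⁻¹ := by
    intro j _
    have e1 : poch (-γ) (j+1) = poch (-γ) j * (-γ + j) := poch_succ _ _
    have e2 : poch (-γ) (j+1) = (-γ) * poch (1-γ) j := by
      rw [poch_succ']; ring_nf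
    have e4 : poch (-γ) j * (-γ + j) = (-γ) * poch (1-γ) j := e1.symm.trans e2
    have hpoch1 : poch (1-γ) j ≠ 0 := poch_ne_zero (fun ℓ _ => by
      have h := hsub (ℓ+1); intro hc; apply h; push_cast; linear_combination -hc)
    have hjγ : γ - (j:F) ≠ 0 := hsub j
    field_simp
    linear_combination -e4
  rw [Finset.sum_congr rfl hterm, ← Finset.mul_sum, sum_inv_lin γ hsub]
  ring

end CharPrime

lemma sum_shift {N : ℕ} (f : ℕ → F) (hper : ∀ j, f (j + N) = f j) (k : ℕ) :
    ∑ j ∈ Finset.range N, f (j + k) = ∑ j ∈ Finset.range N, f j := by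
  induction k with
  | zero => simp
  | succ k ih =>
    set g : ℕ → F := fun j => f (j + k) with hg
    have h0 : ∑ j ∈ Finset.range N, f (j + (k+1)) = ∑ j ∈ Finset.range N, g (j+1) :=
      Finset.sum_congr rfl fun j _ => congrArg f (by omega)
    have h2 : ∑ j ∈ Finset.range (N+1), g j = (∑ j ∈ Finset.range N, g (j+1)) + g 0 :=
      Finset.sum_range_succ' g N
    have h3 : ∑ j ∈ Finset.range (N+1), g j = (∑ j ∈ Finset.range N, g j) + g N :=
      Finset.sum_range_succ g N
    have h4 : g N = g 0 := by
      show f (N + k) = f (0 + k)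
      rw [Nat.add_comm N k, zero_add]
      exact hper k
    have h5 : (∑ j ∈ Finset.range N, g (j+1)) + g 0 = (∑ j ∈ Finset.range N, g j) + g 0 := by
      rw [← h2, h3, h4]
    have h6 := add_right_cancel h5
    rw [h0, h6]
    exact ih

end Aux

open Aux in
theorem stmt8 {F : Type*} [Field F] (d : ℕ) (hd : 1 ≤ d)
    (hprime : Nat.Prime (d + 1)) (hchar : CharP F (d + 1)) (γ : F)
    (hγ : ∀ i : ℕ, i ≤ d → γ ≠ (i : F)) :
    Pmat d γ * Pmat d (-γ) =
        ((Nat.factorial d : F) / poch (1 - γ) d) •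
          (1 : Matrix (Fin (d + 1)) (Fin (d + 1)) F) ∧
      IsUnit (Pmat d γ) := by
  haveI : Fact (Nat.Prime (d+1)) := ⟨hprime⟩
  haveI : CharP F (d+1) := hchar
  have hz : ((d:ℕ):F) + 1 = 0 := by exact_mod_cast CharP.cast_eq_zero F (d+1)
  -- basic nonvanishing
  have hsub : ∀ m : ℕ, γ - (m:F) ≠ 0 := by
    intro m
    have hmlt : m % (d+1) ≤ d := Nat.lt_succ_iff.mp (Nat.mod_lt _ (Nat.succ_pos d))
    have h1 : ((m % (d+1) : ℕ) : F) = (m:F) := by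
      conv_rhs => rw [← Nat.mod_add_div m (d+1)]
      push_cast
      linear_combination (-(((m/(d+1)) : ℕ) : F)) * hz
    rw [← h1]
    exact sub_ne_zero_of_ne (Ne.symm (hγ _ hmlt)).symm
  have hγ0 : γ ≠ 0 := by have h := hsub 0; simpa using h
  have hd1 : ((d:ℕ):F) = -1 := by
    have h0 : ((d:ℕ):F) + 1 = 0 := by exact_mod_cast CharP.cast_eq_zero F (d+1)
    linear_combination h0
  have hpoch1 : ∀ r, poch (1-γ) r ≠ 0 := fun r => poch_ne_zero (fun ℓ _ => by
    have h := hsub (ℓ+1); intro hc; apply h; push_cast; linear_combination -hc)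
  have hpochplus : ∀ r, poch (1+γ) r ≠ 0 := fun r => poch_ne_zero (fun ℓ _ => by
    intro hc; apply hsub ((ℓ+1)*d); push_cast; rw [hd1]; linear_combination hc)
  have hneg1 : ((-1:F))^d = 1 := by
    have h : ((-1:F))^(d+1) = -1 := by
      have h0 := Aux.neg_pow_char (F:=F) (n:=d+1) 1
      rwa [one_pow] at h0
    exact mul_right_cancel₀ (neg_ne_zero.2 (one_ne_zero (α := F)))
      (by rw [← pow_succ, h, one_mul])
  have hprodW : γ^(d+1) - γ = γ * poch (1-γ) d := by
    rw [← Aux.prod_lin γ, Finset.prod_range_succ' (fun m => γ - (m:F)) d]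
    have h1 : ∀ i ∈ Finset.range d, (γ - (((i+1):ℕ):F)) = (-1) * ((1-γ) + (i:F)) := by
      intro i _; push_cast; ring
    rw [Finset.prod_congr rfl h1, Finset.prod_mul_distrib, Finset.prod_const,
      Finset.card_range, hneg1]
    rw [poch]
    push_cast
    ring
  have hWne : γ^(d+1) - γ ≠ 0 := by rw [hprodW]; exact mul_ne_zero hγ0 (hpoch1 d)
  have hwilson : ((d.factorial : ℕ) : F) = -1 := by
    have h := ZMod.wilsons_lemma (p := d+1)
    have h2 := congrArg (ZMod.castHom dvd_rfl F) h
    rw [map_natCast, map_neg, map_one] at h2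
    simpa using h2
  have hcast_pow : ∀ j : ℕ, ((j:F))^(d+1) = (j:F) := Aux.cast_pow_char
  have hpochW : ∀ x : F, x^(d+1) = x → poch (x - γ) (d+1) = γ - γ^(d+1) := by
    intro x hx
    rw [Aux.poch_char, sub_pow_char (R := F) (p := d+1), hx]
    ring
  have hWne' : γ - γ^(d+1) ≠ 0 := fun hc => hWne (by linear_combination -hc)
  -- the main scalar computation
  have entry : ∀ I K : ℕ, I ≤ d → K ≤ d →
      ∑ j ∈ Finset.range (d+1),
        poch (-(I:F) - γ) j / poch (1-γ) j * (poch (γ - (j:F)) K / poch (1+γ) K)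
      = if I = K then (d.factorial : F)/poch (1-γ) d else 0 := by
    intro I K hI hK
    set f : ℕ → F := fun j => poch (-(I:F) - γ) j / poch (1-γ) j * poch (γ - (j:F)) K with hf
    have sum_eq : ∑ j ∈ Finset.range (d+1),
        poch (-(I:F) - γ) j / poch (1-γ) j * (poch (γ - (j:F)) K / poch (1+γ) K)
        = (∑ j ∈ Finset.range (d+1), f j) / poch (1+γ) K := by
      rw [Finset.sum_div]
      exact Finset.sum_congr rfl fun j _ => by rw [hf]; ring
    have hper : ∀ j, f (j + (d+1)) = f j := by
      intro j
      have hx1 : ((j:F) - (I:F))^(d+1) = (j:F) - (I:F) := by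
        rw [sub_pow_char (R := F) (p := d+1), hcast_pow, hcast_pow]
      have hx2 : (1 + (j:F))^(d+1) = 1 + (j:F) := by
        have := hcast_pow (j+1); push_cast at this; linear_combination this
      have e1 : poch (-(I:F) - γ) (j + (d+1))
          = poch (-(I:F) - γ) j * (γ - γ^(d+1)) := by
        rw [Aux.poch_add]
        congr 1
        have hb : -(I:F) - γ + (j:F) = ((j:F) - (I:F)) - γ := by ring
        rw [hb]
        exact hpochW _ hx1
      have e2 : poch (1 - γ) (j + (d+1)) = poch (1-γ) j * (γ - γ^(d+1)) := by
        rw [Aux.poch_add]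
        congr 1
        have hb : 1 - γ + (j:F) = (1 + (j:F)) - γ := by ring
        rw [hb]
        exact hpochW _ hx2
      have e3 : (γ - ((j + (d+1) : ℕ):F)) = γ - (j:F) := by
        push_cast
        linear_combination -hz
      rw [hf]
      simp only [e3]
      rw [e1, e2, mul_div_mul_comm, div_self hWne', mul_one]
    have hkey : ∀ j, f (j + K)
        = (-1)^K * poch (-(I:F) - γ) K
          * (poch (((K:F) - (I:F)) - γ) j / poch (1-γ) j) := by
      intro j
      have hpjK : poch (1 - γ + (j:F)) K ≠ 0 := poch_ne_zero (fun ℓ _ => by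
        intro hc; apply hsub (j + ℓ + 1); push_cast; linear_combination -hc)
      have hp1j : poch (1-γ) j ≠ 0 := hpoch1 j
      rw [hf]
      simp only []
      have hc1 : ((j + K : ℕ):F) = (j:F) + (K:F) := by push_cast; ring
      rw [hc1]
      rw [Aux.poch_add (1-γ) j K]
      rw [show j + K = K + j from Nat.add_comm j K]
      rw [Aux.poch_add (-(I:F) - γ) K j]
      have hb1 : -(I:F) - γ + (K:F) = ((K:F) - (I:F)) - γ := by ring
      have hb3 : γ - ((j:F) + (K:F)) = -(1 - γ + (j:F)) - (K:F) + 1 := by ring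
      rw [hb1, hb3, Aux.poch_reflect (1 - γ + (j:F)) K]
      field_simp [hpjK, hp1j]
    have hshift := Aux.sum_shift f hper K
    have hsum2 : ∑ j ∈ Finset.range (d+1), f j
        = (-1)^K * poch (-(I:F) - γ) K
          * ∑ j ∈ Finset.range (d+1), poch (((K:F) - (I:F)) - γ) j / poch (1-γ) j := by
      rw [← hshift, Finset.sum_congr rfl (fun j _ => hkey j), ← Finset.mul_sum]
    by_cases hIK : I = K
    · subst hIK
      have hm0 : ((I:F) - (I:F)) - γ = -γ := by ring
      rw [if_pos rfl, sum_eq, hsum2, hm0, Aux.phi_zero γ hsub]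
      have hplus : (-1:F)^I * poch (-(I:F) - γ) I = poch (1+γ) I := by
        have hrefl := Aux.poch_reflect (1+γ) I
        have hb : -(1+γ) - (I:F) + 1 = -(I:F) - γ := by ring
        rw [hb] at hrefl
        rw [hrefl, ← mul_assoc, ← mul_pow]
        norm_num
      rw [hplus, hwilson, hprodW]
      field_simp [hγ0, hpoch1 d, hpochplus I]
    · rw [if_neg hIK, sum_eq, hsum2]
      have hm : (K:F) - (I:F) ≠ 0 := by
        intro hc
        apply hIK
        have h2 := CharP.natCast_injOn_Iio F (d+1)
          (Set.mem_Iio.2 (Nat.lt_succ_of_le hI)) (Set.mem_Iio.2 (Nat.lt_succ_of_le hK))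
        exact h2 (by linear_combination -hc)
      have hx : ((K:F) - (I:F))^(d+1) = (K:F) - (I:F) := by
        rw [sub_pow_char (R := F) (p := d+1), hcast_pow, hcast_pow]
      rw [Aux.gosper_sum γ ((K:F) - (I:F)) hm hsub (hpochW _ hx) hWne']
      simp
  -- matrix identity
  have hmul : Pmat d γ * Pmat d (-γ) =
      ((Nat.factorial d : F) / poch (1 - γ) d) •
        (1 : Matrix (Fin (d + 1)) (Fin (d + 1)) F) := by
    ext i k
    rw [Matrix.mul_apply, Matrix.smul_apply, Matrix.one_apply]
    have hI : (i:ℕ) ≤ d := Nat.lt_succ_iff.mp i.isLt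
    have hK : (k:ℕ) ≤ d := Nat.lt_succ_iff.mp k.isLt
    have := entry i.val k.val hI hK
    rw [← Fin.sum_univ_eq_sum_range (fun j => poch (-((i:ℕ):F) - γ) j / poch (1-γ) j
      * (poch (γ - (j:F)) (k:ℕ) / poch (1+γ) (k:ℕ))) (d+1)] at this
    have hterms : ∀ j : Fin (d+1), Pmat d γ i j * Pmat d (-γ) j k
        = poch (-((i:ℕ):F) - γ) (j:ℕ) / poch (1-γ) (j:ℕ)
          * (poch (γ - ((j:ℕ):F)) (k:ℕ) / poch (1+γ) (k:ℕ)) := by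
      intro j
      simp only [Pmat, Matrix.of_apply]
      have hb1 : -((j:ℕ):F) - -γ = γ - ((j:ℕ):F) := by ring
      have hb2 : (1 : F) - -γ = 1 + γ := by ring
      rw [hb1, hb2]
    rw [Finset.sum_congr rfl (fun j _ => hterms j), this]
    by_cases hik : i = k
    · subst hik; simp [Fin.ext_iff]
    · rw [if_neg (fun hc : (i:ℕ) = (k:ℕ) => hik (Fin.ext hc)), if_neg hik]
      simp
  refine ⟨hmul, ?_⟩
  -- invertibility
  have hc : (Nat.factorial d : F) / poch (1 - γ) d ≠ 0 := by
    apply div_ne_zero _ (hpoch1 d)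
    rw [hwilson]
    exact neg_ne_zero.2 one_ne_zero
  have hdet : (Pmat d γ).det * (Pmat d (-γ)).det
      = ((Nat.factorial d : F) / poch (1 - γ) d)^(d+1) := by
    rw [← Matrix.det_mul, hmul, Matrix.det_smul, Matrix.det_one, mul_one, Fintype.card_fin]
  apply (Matrix.isUnit_iff_isUnit_det _).mpr
  refine isUnit_of_mul_isUnit_left (y := (Pmat d (-γ)).det) ?_
  rw [hdet]
  exact (hc.isUnit).pow _
end
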